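/- Let Ω ⊆ ℝ³ be a bounded smooth domain and suppose u ∈ C¹(Ω̄; ℝ³) satisfies curl u = f in Ω with div f = 0. Then for each connected component Γᵢ of ∂Ω (i ≥ 1, bounded complement components), ∫_{Γᵢ} f · N dS = 0, and consequently ∫_Γ f · N dS = 0 for every connected component Γ of ∂Ω. -/

import Mathlib

open MeasureTheory Set
open scoped ContDiff

/-- Partial derivative `∂f/∂xᵢ` of a scalar function on `ℝ³`. -/
noncomputable def pd (f : (Fin 3 → ℝ) → ℝ) (i : Fin 3) (x : Fin 3 → ℝ) : ℝ :=
  fderiv ℝ f x (Pi.single i 1)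

/-- The divergence `∇ · u` of a vector field on `ℝ³`. -/
noncomputable def vdiv (u : (Fin 3 → ℝ) → (Fin 3 → ℝ)) (x : Fin 3 → ℝ) : ℝ :=
  ∑ i, pd (fun y => u y i) i x

/-- The curl `∇ × u` of a vector field on `ℝ³`. -/
noncomputable def vcurl (u : (Fin 3 → ℝ) → (Fin 3 → ℝ)) (x : Fin 3 → ℝ) : Fin 3 → ℝ :=
  ![pd (fun y => u y 2) 1 x - pd (fun y => u y 1) 2 x,
    pd (fun y => u y 0) 2 x - pd (fun y => u y 2) 0 x,
    pd (fun y => u y 1) 0 x - pd (fun y => u y 0) 1 x]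

/-- Euclidean dot product on `ℝ³`. -/
def dot (a b : Fin 3 → ℝ) : ℝ := ∑ i, a i * b i

/-- Cross product on `ℝ³`. -/
def cross (a b : Fin 3 → ℝ) : Fin 3 → ℝ :=
  ![a 1 * b 2 - a 2 * b 1, a 2 * b 0 - a 0 * b 2, a 0 * b 1 - a 1 * b 0]

/-- The gradient of a scalar function on `ℝ³`. -/
noncomputable def grad (f : (Fin 3 → ℝ) → ℝ) (x : Fin 3 → ℝ) : Fin 3 → ℝ :=
  fun i => pd f i x

lemma pd_mul {a b : (Fin 3 → ℝ) → ℝ} {x : Fin 3 → ℝ} (ha : DifferentiableAt ℝ a x)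
    (hb : DifferentiableAt ℝ b x) (i : Fin 3) :
    pd (fun y => a y * b y) i x = pd a i x * b x + a x * pd b i x := by
  unfold pd
  rw [fderiv_fun_mul ha hb]
  simp only [ContinuousLinearMap.add_apply, ContinuousLinearMap.smul_apply, smul_eq_mul]
  ring

lemma pd_sub {a b : (Fin 3 → ℝ) → ℝ} {x : Fin 3 → ℝ} (ha : DifferentiableAt ℝ a x)
    (hb : DifferentiableAt ℝ b x) (i : Fin 3) :
    pd (fun y => a y - b y) i x = pd a i x - pd b i x := by
  unfold pd
  rw [fderiv_fun_sub ha hb]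
  simp

lemma pd_pd {φ : (Fin 3 → ℝ) → ℝ} (hφ : ContDiff ℝ ∞ φ) (a b : Fin 3) (x : Fin 3 → ℝ) :
    pd (fun y => pd φ b y) a x
      = fderiv ℝ (fderiv ℝ φ) x (Pi.single a 1) (Pi.single b 1) := by
  have hc : DifferentiableAt ℝ (fderiv ℝ φ) x :=
    ((hφ.fderiv_right (m := ∞) (by norm_num)).differentiable (by norm_num)).differentiableAt
  have h := (hc.hasFDerivAt.clm_apply (hasFDerivAt_const (Pi.single b 1) x)).fderiv
  unfold pd
  rw [h]
  simp

lemma pd_pd_symm {φ : (Fin 3 → ℝ) → ℝ} (hφ : ContDiff ℝ ∞ φ) (a b : Fin 3) (x : Fin 3 → ℝ) :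
    pd (fun y => pd φ b y) a x = pd (fun y => pd φ a y) b x := by
  rw [pd_pd hφ, pd_pd hφ]
  exact second_derivative_symmetric
    (fun y => ((hφ.differentiable (by norm_num)) y).hasFDerivAt)
    (((hφ.fderiv_right (m := ∞) (by norm_num)).differentiable (by norm_num)) x).hasFDerivAt _ _

lemma diffAt_coord {Ω : Set (Fin 3 → ℝ)} (hΩo : IsOpen Ω)
    {u : (Fin 3 → ℝ) → (Fin 3 → ℝ)} (hu : ContDiffOn ℝ 1 u (closure Ω))
    {x : Fin 3 → ℝ} (hx : x ∈ Ω) (i : Fin 3) :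
    DifferentiableAt ℝ (fun y => u y i) x := by
  have h1 : DifferentiableAt ℝ u x :=
    (hu.differentiableOn one_ne_zero).differentiableAt
      (Filter.mem_of_superset (hΩo.mem_nhds hx) subset_closure)
  exact ((ContinuousLinearMap.proj i : ((Fin 3 → ℝ)) →L[ℝ] ℝ).differentiableAt).comp x h1

lemma vdiv_field_zero {Ω : Set (Fin 3 → ℝ)} (hΩo : IsOpen Ω)
    {u f : (Fin 3 → ℝ) → (Fin 3 → ℝ)} {φ : (Fin 3 → ℝ) → ℝ}
    (hu : ContDiffOn ℝ 1 u (closure Ω)) (hf : ContDiffOn ℝ 1 f (closure Ω))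
    (hφ : ContDiff ℝ ∞ φ)
    (hcurl : ∀ x ∈ Ω, vcurl u x = f x) (hdivf : ∀ x ∈ Ω, vdiv f x = 0)
    {x : Fin 3 → ℝ} (hx : x ∈ Ω) :
    vdiv (fun y i => φ y * f y i - cross (u y) (grad φ y) i) x = 0 := by
  have hU : ∀ j, DifferentiableAt ℝ (fun y => u y j) x := diffAt_coord hΩo hu hx
  have hF : ∀ j, DifferentiableAt ℝ (fun y => f y j) x := diffAt_coord hΩo hf hx
  have hφd : DifferentiableAt ℝ φ x := (hφ.differentiable (by norm_num)).differentiableAt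
  have hV : ∀ j, DifferentiableAt ℝ (fun y => pd φ j y) x := by
    intro j
    have hc : DifferentiableAt ℝ (fderiv ℝ φ) x :=
      (((hφ.fderiv_right (m := ∞) (by norm_num))).differentiable (by norm_num)).differentiableAt
    exact hc.clm_apply (differentiableAt_const _)
  -- curl components
  have hc0 := congrFun (hcurl x hx) 0
  have hc1 := congrFun (hcurl x hx) 1
  have hc2 := congrFun (hcurl x hx) 2
  simp only [vcurl, Matrix.cons_val_zero, Matrix.cons_val_one, Matrix.head_cons,
    Matrix.cons_val_two, Matrix.tail_cons] at hc0 hc1 hc2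
  have hdv := hdivf x hx
  unfold vdiv at hdv ⊢
  rw [Fin.sum_univ_three] at hdv ⊢
  simp only [cross, grad, Matrix.cons_val_zero, Matrix.cons_val_one, Matrix.head_cons,
    Matrix.cons_val_two, Matrix.tail_cons]
  rw [pd_sub (hφd.fun_mul (hF 0)) (((hU 1).fun_mul (hV 2)).fun_sub ((hU 2).fun_mul (hV 1))),
      pd_sub (hφd.fun_mul (hF 1)) (((hU 2).fun_mul (hV 0)).fun_sub ((hU 0).fun_mul (hV 2))),
      pd_sub (hφd.fun_mul (hF 2)) (((hU 0).fun_mul (hV 1)).fun_sub ((hU 1).fun_mul (hV 0))),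
      pd_mul hφd (hF 0), pd_mul hφd (hF 1), pd_mul hφd (hF 2),
      pd_sub ((hU 1).fun_mul (hV 2)) ((hU 2).fun_mul (hV 1)),
      pd_sub ((hU 2).fun_mul (hV 0)) ((hU 0).fun_mul (hV 2)),
      pd_sub ((hU 0).fun_mul (hV 1)) ((hU 1).fun_mul (hV 0)),
      pd_mul (hU 1) (hV 2), pd_mul (hU 2) (hV 1),
      pd_mul (hU 2) (hV 0), pd_mul (hU 0) (hV 2),
      pd_mul (hU 0) (hV 1), pd_mul (hU 1) (hV 0)]
  rw [pd_pd_symm hφ 0 2, pd_pd_symm hφ 0 1, pd_pd_symm hφ 1 2]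
  rw [← hc0, ← hc1, ← hc2]
  linear_combination (φ x) * hdv

lemma contDiffOn_field {Ω : Set (Fin 3 → ℝ)}
    {u f : (Fin 3 → ℝ) → (Fin 3 → ℝ)} {φ : (Fin 3 → ℝ) → ℝ}
    (hu : ContDiffOn ℝ 1 u (closure Ω)) (hf : ContDiffOn ℝ 1 f (closure Ω))
    (hφ : ContDiff ℝ ∞ φ) :
    ContDiffOn ℝ 1 (fun y i => φ y * f y i - cross (u y) (grad φ y) i) (closure Ω) := by
  have hφ1 : ContDiffOn ℝ 1 φ (closure Ω) := (hφ.of_le (by norm_num)).contDiffOn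
  have hfi : ∀ i, ContDiffOn ℝ 1 (fun y => f y i) (closure Ω) := fun i =>
    (ContinuousLinearMap.proj i : ((Fin 3 → ℝ)) →L[ℝ] ℝ).contDiff.comp_contDiffOn hf
  have hui : ∀ i, ContDiffOn ℝ 1 (fun y => u y i) (closure Ω) := fun i =>
    (ContinuousLinearMap.proj i : ((Fin 3 → ℝ)) →L[ℝ] ℝ).contDiff.comp_contDiffOn hu
  have hVj : ∀ j, ContDiffOn ℝ 1 (fun y => pd φ j y) (closure Ω) := by
    intro j
    have h1 : ContDiff ℝ 1 (fun y => fderiv ℝ φ y (Pi.single j 1)) :=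
      ((hφ.fderiv_right (m := ∞) (by norm_num)).of_le (by norm_num)).clm_apply contDiff_const
    exact h1.contDiffOn
  apply contDiffOn_pi.2
  intro i
  fin_cases i <;>
    simp only [cross, grad, Matrix.cons_val_zero, Matrix.cons_val_one, Matrix.head_cons,
      Matrix.cons_val_two, Matrix.tail_cons, Fin.isValue] <;>
  · exact (hφ1.mul (hfi _)).sub (((hui _).mul (hVj _)).sub ((hui _).mul (hVj _)))

open Manifold in
lemma clopen_flux
    (Ω : Set (Fin 3 → ℝ)) (hΩo : IsOpen Ω)
    (σ : Measure (Fin 3 → ℝ)) (N : (Fin 3 → ℝ) → (Fin 3 → ℝ))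
    (hdivthm : ∀ F : (Fin 3 → ℝ) → (Fin 3 → ℝ), ContDiffOn ℝ 1 F (closure Ω) →
      ∫ x in Ω, vdiv F x = ∫ x in frontier Ω, dot (F x) (N x) ∂σ)
    (u f : (Fin 3 → ℝ) → (Fin 3 → ℝ))
    (hu : ContDiffOn ℝ 1 u (closure Ω))
    (hf : ContDiffOn ℝ 1 f (closure Ω))
    (hcurl : ∀ x ∈ Ω, vcurl u x = f x)
    (hdivf : ∀ x ∈ Ω, vdiv f x = 0)
    (C : Set (Fin 3 → ℝ)) (hCsub : C ⊆ frontier Ω)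
    (hCcomp : IsCompact C) (hCcomp' : IsCompact (frontier Ω \ C)) :
    ∫ y in C, dot (f y) (N y) ∂σ = 0 := by
  classical
  -- separate C from frontier Ω \ C by open sets
  obtain ⟨U, V, hUo, hVo, hCU, hCV, hUV⟩ :=
    SeparatedNhds.of_isCompact_isCompact hCcomp hCcomp' disjoint_sdiff_self_right
  obtain ⟨K, hKcomp, hCK, hKU⟩ := exists_compact_between hCcomp hUo hCU
  -- smooth cutoff
  obtain ⟨φ₀, h0, h1, -⟩ := exists_contMDiffMap_zero_one_of_isClosed (n := ⊤) 𝓘(ℝ, Fin 3 → ℝ)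
    (isOpen_compl_iff.1 (by simpa using hUo)) hKcomp.isClosed
    (disjoint_compl_left_iff.2 hKU)
  set φ : (Fin 3 → ℝ) → ℝ := ⇑φ₀ with hφdef
  have hφ : ContDiff ℝ ∞ φ := by
    have := contMDiff_iff_contDiff.mp φ₀.contMDiff
    exact this
  -- gradient of φ vanishes on the frontier
  have hgrad0 : ∀ y ∈ frontier Ω, fderiv ℝ φ y = 0 := by
    intro y hy
    by_cases hyC : y ∈ C
    · have hev : φ =ᶠ[nhds y] (fun _ => (1 : ℝ)) := by
        filter_upwards [isOpen_interior.mem_nhds (hCK hyC)] with z hz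
        exact h1 (interior_subset hz)
      rw [hev.fderiv_eq]
      exact fderiv_const_apply 1
    · have hyV : y ∈ V := hCV ⟨hy, hyC⟩
      have hev : φ =ᶠ[nhds y] (fun _ => (0 : ℝ)) := by
        filter_upwards [hVo.mem_nhds hyV] with z hz
        exact h0 (fun hzU => (hUV.le_bot ⟨hzU, hz⟩))
      rw [hev.fderiv_eq]
      exact fderiv_const_apply 0
  have hφval : ∀ y ∈ frontier Ω, φ y = if y ∈ C then 1 else 0 := by
    intro y hy
    by_cases hyC : y ∈ C
    · simp [hyC, h1 (interior_subset (hCK hyC))]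
    · simp only [hyC, if_false]
      exact h0 (fun hzU => (hUV.le_bot ⟨hzU, hCV ⟨hy, hyC⟩⟩))
  set H : (Fin 3 → ℝ) → (Fin 3 → ℝ) :=
    fun y i => φ y * f y i - cross (u y) (grad φ y) i with hHdef
  have key := hdivthm H (contDiffOn_field hu hf hφ)
  have hL : ∫ x in Ω, vdiv H x = 0 := by
    rw [setIntegral_congr_fun hΩo.measurableSet
      (fun x hx => vdiv_field_zero hΩo hu hf hφ hcurl hdivf hx)]
    simp
  have hR : ∀ x ∈ frontier Ω, dot (H x) (N x)
      = C.indicator (fun y => dot (f y) (N y)) x := by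
    intro x hx
    have hg : grad φ x = fun _ => (0 : ℝ) := by
      funext j
      simp [grad, pd, hgrad0 x hx]
    have hHx : ∀ i, H x i = φ x * f x i := by
      intro i
      simp only [hHdef, hg]
      have : cross (u x) (fun _ => (0:ℝ)) i = 0 := by
        fin_cases i <;> simp [cross]
      rw [this, sub_zero]
    have : dot (H x) (N x) = φ x * dot (f x) (N x) := by
      simp only [dot, Fin.sum_univ_three, hHx]; ring
    rw [this, hφval x hx, Set.indicator_apply]
    by_cases hxC : x ∈ C <;> simp [hxC]
  have hmeasC : MeasurableSet C := hCcomp.isClosed.measurableSet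
  calc ∫ y in C, dot (f y) (N y) ∂σ
      = ∫ y in frontier Ω ∩ C, dot (f y) (N y) ∂σ := by
        rw [Set.inter_eq_self_of_subset_right hCsub]
    _ = ∫ y in frontier Ω, C.indicator (fun y => dot (f y) (N y)) y ∂σ :=
        (setIntegral_indicator hmeasC).symm
    _ = ∫ y in frontier Ω, dot (H y) (N y) ∂σ :=
        (setIntegral_congr_fun isClosed_frontier.measurableSet (fun y hy => (hR y hy).symm))
    _ = ∫ x in Ω, vdiv H x := key.symm
    _ = 0 := hL

lemma countable_clopens (X : Type*) [TopologicalSpace X] [CompactSpace X]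
    [SecondCountableTopology X] : {s : Set X | IsClopen s}.Countable := by
  have key : ∀ s : {s : Set X | IsClopen s},
      ∃ t : Finset (TopologicalSpace.countableBasis X), (s : Set X) = (SetLike.coe t).sUnion := by
    rintro ⟨s, hs⟩
    exact eq_sUnion_finset_of_isTopologicalBasis_of_isCompact_open _
      (TopologicalSpace.isBasis_countableBasis X) s hs.isClosed.isCompact hs.isOpen
  have : Countable (TopologicalSpace.countableBasis X) :=
    (TopologicalSpace.countable_countableBasis X).to_subtype
  rw [← Set.countable_coe_iff]
  have hinj : Function.Injective (fun s : {s : Set X | IsClopen s} => (key s).choose) := by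
    intro s t h
    simp only at h
    ext1
    rw [(key s).choose_spec, (key t).choose_spec, h]
  exact hinj.countable

lemma exists_antitone_seq {α : Type*} (F : Set (Set α)) (hc : F.Countable) (hne : F.Nonempty)
    (hdir : ∀ s ∈ F, ∀ t ∈ F, s ∩ t ∈ F) :
    ∃ D : ℕ → Set α, (∀ n, D n ∈ F) ∧ Antitone D ∧ (⋂ n, D n) = ⋂₀ F := by
  obtain ⟨e, he⟩ := Set.Countable.exists_eq_range hc hne
  have hmem : ∀ n, e n ∈ F := fun n => he ▸ Set.mem_range_self n
  let D : ℕ → Set α := fun n => Nat.rec (e 0) (fun k Dk => Dk ∩ e (k + 1)) n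
  have hD : ∀ n, D n ∈ F := by
    intro n
    induction n with
    | zero => exact hmem 0
    | succ k ih => exact hdir _ ih _ (hmem (k + 1))
  have hDsub : ∀ n, D n ⊆ e n := by
    intro n
    cases n with
    | zero => exact subset_rfl
    | succ k => exact Set.inter_subset_right
  have hanti : Antitone D := by
    apply antitone_nat_of_succ_le
    intro n
    exact Set.inter_subset_left
  refine ⟨D, hD, hanti, ?_⟩
  apply Set.Subset.antisymm
  · intro y hy
    rw [he]
    rintro s ⟨n, rfl⟩
    exact hDsub n (Set.mem_iInter.1 hy n)
  · intro y hy
    apply Set.mem_iInter.2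
    intro n
    induction n with
    | zero => exact hy _ (hmem 0)
    | succ k ih => exact ⟨ih, hy _ (hmem (k + 1))⟩

lemma pd_coord_add_const (a : Fin 3 → ℝ) (i : Fin 3) (x : Fin 3 → ℝ) :
    pd (fun y => y i + a i) i x = 1 := by
  unfold pd
  rw [fderiv_add_const]
  have : (fun y : Fin 3 → ℝ => y i) = (ContinuousLinearMap.proj i :
      ((Fin 3 → ℝ)) →L[ℝ] ℝ) := rfl
  rw [this, ContinuousLinearMap.fderiv]
  simp

lemma integrable_flux
    (Ω : Set (Fin 3 → ℝ)) (hΩo : IsOpen Ω) (hΩb : Bornology.IsBounded Ω)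
    (hΩc : IsConnected Ω)
    (σ : Measure (Fin 3 → ℝ)) (N : (Fin 3 → ℝ) → (Fin 3 → ℝ))
    (hdivthm : ∀ F : (Fin 3 → ℝ) → (Fin 3 → ℝ), ContDiffOn ℝ 1 F (closure Ω) →
      ∫ x in Ω, vdiv F x = ∫ x in frontier Ω, dot (F x) (N x) ∂σ)
    (f : (Fin 3 → ℝ) → (Fin 3 → ℝ)) (hf : ContDiffOn ℝ 1 f (closure Ω)) :
    Integrable (fun y => dot (f y) (N y)) (σ.restrict (frontier Ω)) := by
  have hvolpos : 0 < (volume Ω) := hΩo.measure_pos volume hΩc.nonempty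
  have hvolfin : volume Ω < ⊤ :=
    lt_of_le_of_lt (measure_mono subset_closure) hΩb.isCompact_closure.measure_lt_top
  have hvol : (volume Ω).toReal ≠ 0 := by
    simp [ENNReal.toReal_eq_zero_iff, hvolpos.ne', hvolfin.ne]
  have ha : ∀ a : Fin 3 → ℝ,
      Integrable (fun y => dot (fun i => y i + a i) (N y)) (σ.restrict (frontier Ω)) := by
    intro a
    have hFa : ContDiffOn ℝ 1 (fun y i => y i + a i) (closure Ω) :=
      ((contDiff_id.add contDiff_const : ContDiff ℝ 1 (fun y : Fin 3 → ℝ => y + a))).contDiffOn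
    have key := hdivthm _ hFa
    have hdiv3 : ∀ x : Fin 3 → ℝ, vdiv (fun y i => y i + a i) x = 3 := by
      intro x
      unfold vdiv
      rw [Fin.sum_univ_three]
      rw [pd_coord_add_const, pd_coord_add_const, pd_coord_add_const]
      norm_num
    have hL : ∫ x in Ω, vdiv (fun y i => y i + a i) x = 3 * (volume Ω).toReal := by
      rw [setIntegral_congr_fun hΩo.measurableSet (fun x _ => hdiv3 x)]
      rw [setIntegral_const]
      simp [mul_comm, Measure.real]
    by_contra hni
    rw [key, integral_undef hni] at hL
    exact hvol (by linarith)
  have hNi : ∀ i, Integrable (fun y => N y i) (σ.restrict (frontier Ω)) := by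
    intro i
    have h := (ha (Pi.single i 1)).sub (ha 0)
    apply h.congr
    apply Filter.Eventually.of_forall
    intro y
    simp only [dot, Fin.sum_univ_three, Pi.zero_apply]
    fin_cases i <;> simp [Pi.single_apply] <;> ring
  have hfc : ContinuousOn f (frontier Ω) :=
    (hf.continuousOn).mono frontier_subset_closure
  have hfrc : IsCompact (frontier Ω) :=
    hΩb.isCompact_closure.of_isClosed_subset isClosed_frontier frontier_subset_closure
  obtain ⟨M, hM⟩ := hfrc.exists_bound_of_continuousOn hfc
  have hfi : ∀ i, Integrable (fun y => f y i * N y i) (σ.restrict (frontier Ω)) := by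
    intro i
    apply (hNi i).bdd_mul (c := M)
    · exact (((continuous_apply i).comp_continuousOn hfc)).aestronglyMeasurable
        isClosed_frontier.measurableSet
    · rw [ae_restrict_iff' isClosed_frontier.measurableSet]
      apply Filter.Eventually.of_forall
      intro y hy
      exact le_trans (norm_le_pi_norm (f y) i) (hM y hy)
  have := ((hfi 0).add (hfi 1)).add (hfi 2)
  apply this.congr
  apply Filter.Eventually.of_forall
  intro y
  simp [dot, Fin.sum_univ_three]

/-- If `u ∈ C¹(Ω̄; ℝ³)` satisfies `curl u = f` in `Ω` with `div f = 0`, then the flux of `f`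
through every connected component `Γ` of `∂Ω` vanishes: `∫_Γ f · N dS = 0`.  The smooth
bounded domain is encoded by a boundary surface measure `σ` and outward unit normal `N`
satisfying the divergence theorem. -/
theorem flux_vanishes_on_boundary_components
    (Ω : Set (Fin 3 → ℝ)) (hΩo : IsOpen Ω) (hΩb : Bornology.IsBounded Ω)
    (hΩc : IsConnected Ω)
    (σ : Measure (Fin 3 → ℝ)) (N : (Fin 3 → ℝ) → (Fin 3 → ℝ))
    (hN : ∀ x ∈ frontier Ω, dot (N x) (N x) = 1)
    (hdivthm : ∀ F : (Fin 3 → ℝ) → (Fin 3 → ℝ), ContDiffOn ℝ 1 F (closure Ω) →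
      ∫ x in Ω, vdiv F x = ∫ x in frontier Ω, dot (F x) (N x) ∂σ)
    (u f : (Fin 3 → ℝ) → (Fin 3 → ℝ))
    (hu : ContDiffOn ℝ 1 u (closure Ω))
    (hf : ContDiffOn ℝ 1 f (closure Ω))
    (hcurl : ∀ x ∈ Ω, vcurl u x = f x)
    (hdivf : ∀ x ∈ Ω, vdiv f x = 0) :
    ∀ x ∈ frontier Ω,
      ∫ y in connectedComponentIn (frontier Ω) x, dot (f y) (N y) ∂σ = 0 := by
  intro x hx
  set g : (Fin 3 → ℝ) → ℝ := fun y => dot (f y) (N y) with hgdef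
  have hfrc : IsCompact (frontier Ω) :=
    hΩb.isCompact_closure.of_isClosed_subset isClosed_frontier frontier_subset_closure
  haveI : CompactSpace ↥(frontier Ω) := isCompact_iff_compactSpace.mp hfrc
  set X := ↥(frontier Ω)
  set x' : X := ⟨x, hx⟩ with hx'def
  -- the family of clopen sets containing x'
  set F : Set (Set X) := {s : Set X | IsClopen s ∧ x' ∈ s} with hFdef
  have hFc : F.Countable := (countable_clopens X).mono (fun s hs => hs.1)
  have hFne : F.Nonempty := ⟨Set.univ, isClopen_univ, Set.mem_univ _⟩
  have hFdir : ∀ s ∈ F, ∀ t ∈ F, s ∩ t ∈ F :=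
    fun s hs t ht => ⟨hs.1.inter ht.1, ⟨hs.2, ht.2⟩⟩
  obtain ⟨D, hD, hDanti, hDeq⟩ := exists_antitone_seq F hFc hFne hFdir
  have hcomp : connectedComponent x' = ⋂ n, D n := by
    rw [hDeq, connectedComponent_eq_iInter_isClopen x', Set.sInter_eq_iInter]
    rfl
  set Cn : ℕ → Set (Fin 3 → ℝ) := fun n => Subtype.val '' D n with hCndef
  have hCnsub : ∀ n, Cn n ⊆ frontier Ω := fun n => Subtype.coe_image_subset _ _
  have hCncpt : ∀ n, IsCompact (Cn n) := fun n =>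
    ((hD n).1.isClosed.isCompact).image continuous_subtype_val
  have hCndiff : ∀ n, frontier Ω \ Cn n = Subtype.val '' (D n)ᶜ := by
    intro n
    ext y
    constructor
    · rintro ⟨hy1, hy2⟩
      exact ⟨⟨y, hy1⟩, fun hmem => hy2 ⟨⟨y, hy1⟩, hmem, rfl⟩, rfl⟩
    · rintro ⟨z, hz, rfl⟩
      refine ⟨z.2, ?_⟩
      rintro ⟨w, hw, hwz⟩
      exact hz (by rwa [Subtype.val_injective hwz] at hw)
  have hCncpt' : ∀ n, IsCompact (frontier Ω \ Cn n) := by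
    intro n
    rw [hCndiff n]
    exact (((hD n).1.compl.isClosed).isCompact).image continuous_subtype_val
  have hflux : ∀ n, ∫ y in Cn n, g y ∂σ = 0 := fun n =>
    clopen_flux Ω hΩo σ N hdivthm u f hu hf hcurl hdivf (Cn n) (hCnsub n)
      (hCncpt n) (hCncpt' n)
  -- the component is the intersection of the Cn
  have hK : connectedComponentIn (frontier Ω) x = ⋂ n, Cn n := by
    rw [connectedComponentIn_eq_image hx, hcomp]
    exact Subtype.val_injective.injOn.image_iInter_eq
  set K : Set (Fin 3 → ℝ) := ⋂ n, Cn n with hKdef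
  have hKsub : K ⊆ frontier Ω := (Set.iInter_subset _ 0).trans (hCnsub 0)
  have hKmeas : MeasurableSet K :=
    MeasurableSet.iInter (fun n => (hCncpt n).isClosed.measurableSet)
  have hKC : ∀ n, K ⊆ Cn n := fun n => Set.iInter_subset _ n
  have hCnanti : Antitone Cn := fun m n h => Set.image_mono (hDanti h)
  -- integrability
  have hg : Integrable g (σ.restrict (frontier Ω)) :=
    integrable_flux Ω hΩo hΩb hΩc σ N hdivthm f hf
  -- dominated convergence
  have hdct : Filter.Tendsto (fun n => ∫ y, (Cn n).indicator g y ∂(σ.restrict (frontier Ω)))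
      Filter.atTop (nhds (∫ y, K.indicator g y ∂(σ.restrict (frontier Ω)))) := by
    apply tendsto_integral_of_dominated_convergence (fun y => ‖g y‖)
    · exact fun n => hg.aestronglyMeasurable.indicator (hCncpt n).isClosed.measurableSet
    · exact hg.norm
    · intro n
      apply Filter.Eventually.of_forall
      intro y
      exact norm_indicator_le_norm_self g y
    · apply Filter.Eventually.of_forall
      intro y
      by_cases hyK : y ∈ K
      · have : ∀ n, (Cn n).indicator g y = K.indicator g y := by
          intro n
          rw [Set.indicator_of_mem (hKC n hyK), Set.indicator_of_mem hyK]
        simp only [this]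
        exact tendsto_const_nhds
      · obtain ⟨m, hm⟩ : ∃ m, y ∉ Cn m := by
          by_contra hcon
          push_neg at hcon
          exact hyK (Set.mem_iInter.2 hcon)
        rw [Set.indicator_of_notMem hyK]
        apply tendsto_const_nhds.congr'
        filter_upwards [Filter.eventually_ge_atTop m] with n hn
        exact (Set.indicator_of_notMem (fun hyn => hm (hCnanti hn hyn)) g).symm
  have hzero : ∀ n, ∫ y, (Cn n).indicator g y ∂(σ.restrict (frontier Ω)) = 0 := by
    intro n
    rw [setIntegral_indicator (hCncpt n).isClosed.measurableSet,
      Set.inter_eq_self_of_subset_right (hCnsub n)]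
    exact hflux n
  have hlim : ∫ y, K.indicator g y ∂(σ.restrict (frontier Ω)) = 0 := by
    have h2 : Filter.Tendsto (fun _ : ℕ => (0 : ℝ)) Filter.atTop
        (nhds (∫ y, K.indicator g y ∂(σ.restrict (frontier Ω)))) := by
      simpa only [hzero] using hdct
    exact (tendsto_nhds_unique h2 tendsto_const_nhds)
  rw [hK]
  calc ∫ y in K, g y ∂σ = ∫ y in frontier Ω ∩ K, g y ∂σ := by
        rw [Set.inter_eq_self_of_subset_right hKsub]
    _ = ∫ y, K.indicator g y ∂(σ.restrict (frontier Ω)) :=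
        (setIntegral_indicator hKmeas).symm
    _ = 0 := hlim
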